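/- For every prime power p and every positive integer m, there exists an r-partite r-uniform hypergraph with r = p + 2, with r vertex classes each of size pm, modeled as a set E of edges E ⊆ ∏_{i=1}^{r} [pm] (each edge selects one vertex from each class), with no repeated edges, such that every vertex (i.e., every pair of a class index i ∈ [r] and an element of [pm]) lies in exactly d = p²m edges, and the maximum size of a matching in E is exactly m. In particular, the largest matching covers only a 1/p = 1/(r−2) fraction of the r·pm vertices. -/

import Mathlib

open Finset

/-- Parameter space for edges: `(a, b, c, s, t)`. -/
abbrev HGParam (K : Type*) (m : ℕ) := K × K × K × Fin m × Fin m

/-- The edge associated to parameters `(a,b,c,s,t)`: class `x ∈ K` gets vertex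
`(a·x + b, s)`, class `∞₁` gets `(a, s)`, class `∞₂` gets `(c, t)`. -/
def hgEdge {K : Type*} [Field K] {p m : ℕ} (eK : Fin p ≃ K)
    (τ : K × Fin m ≃ Fin (p * m)) (z : HGParam K m) (i : Fin (p + 2)) : Fin (p * m) :=
  Sum.elim (fun x : Fin p => τ (z.1 * eK x + z.2.1, z.2.2.2.1))
    (fun o : Fin 2 => if o = 0 then τ (z.1, z.2.2.2.1) else τ (z.2.2.1, z.2.2.2.2))
    (finSumFinEquiv.symm i)

section

variable {K : Type*} [Field K] {p m : ℕ} (eK : Fin p ≃ K)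
    (τ : K × Fin m ≃ Fin (p * m)) (z : HGParam K m)

lemma hgEdge_inl (x : Fin p) :
    hgEdge eK τ z (finSumFinEquiv (Sum.inl x)) = τ (z.1 * eK x + z.2.1, z.2.2.2.1) := by
  simp [hgEdge]

lemma hgEdge_inr0 :
    hgEdge eK τ z (finSumFinEquiv (Sum.inr 0)) = τ (z.1, z.2.2.2.1) := by
  simp [hgEdge]

lemma hgEdge_inr1' (o : Fin 2) (ho : o ≠ 0) :
    hgEdge eK τ z (finSumFinEquiv (Sum.inr o)) = τ (z.2.2.1, z.2.2.2.2) := by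
  simp [hgEdge, ho]

lemma hgEdge_inr1 :
    hgEdge eK τ z (finSumFinEquiv (Sum.inr 1)) = τ (z.2.2.1, z.2.2.2.2) :=
  hgEdge_inr1' eK τ z 1 (by decide)

lemma hgEdge_injective (hp : 0 < p) : Function.Injective (hgEdge eK τ) := by
  intro z z' h
  have h0 := congrFun h (finSumFinEquiv (Sum.inr 0))
  rw [hgEdge_inr0, hgEdge_inr0] at h0
  obtain ⟨ha, hs⟩ := Prod.ext_iff.mp (τ.injective h0)
  have h1 := congrFun h (finSumFinEquiv (Sum.inr 1))
  rw [hgEdge_inr1, hgEdge_inr1] at h1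
  obtain ⟨hc, ht⟩ := Prod.ext_iff.mp (τ.injective h1)
  have h2 := congrFun h (finSumFinEquiv (Sum.inl ⟨0, hp⟩))
  rw [hgEdge_inl, hgEdge_inl] at h2
  obtain ⟨h2', -⟩ := Prod.ext_iff.mp (τ.injective h2)
  have hb : z.2.1 = z'.2.1 := by
    have := h2'
    simp only at this ha ⊢
    rw [ha] at this
    exact add_left_cancel this
  obtain ⟨a, b, c, s, t⟩ := z
  obtain ⟨a', b', c', s', t'⟩ := z'
  simp_all

end

lemma hg_main (K : Type) [Field K] [Fintype K] [DecidableEq K] (p m : ℕ)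
    (hK : Fintype.card K = p) (hp : 0 < p) (hm : 0 < m) :
    ∃ E : Finset (Fin (p + 2) → Fin (p * m)),
      (∀ (i : Fin (p + 2)) (v : Fin (p * m)),
        (E.filter (fun e => e i = v)).card = p ^ 2 * m) ∧
      IsGreatest {s : ℕ | ∃ M ⊆ E,
        (∀ e ∈ M, ∀ f ∈ M, e ≠ f → ∀ i, e i ≠ f i) ∧ M.card = s} m := by
  classical
  obtain ⟨eK'⟩ : Nonempty (K ≃ Fin p) := ⟨Fintype.equivFinOfCardEq hK⟩
  set eK : Fin p ≃ K := eK'.symm with heK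
  obtain ⟨τ⟩ : Nonempty (K × Fin m ≃ Fin (p * m)) :=
    ⟨Fintype.equivFinOfCardEq (by simp [hK])⟩
  set f : HGParam K m → Fin (p + 2) → Fin (p * m) := hgEdge eK τ with hf
  have finj : Function.Injective f := hgEdge_injective eK τ hp
  refine ⟨Finset.image f univ, ?_, ?_, ?_⟩
  · -- regularity
    intro i v
    rw [Finset.filter_image, Finset.card_image_of_injective _ finj]
    obtain ⟨j, rfl⟩ := finSumFinEquiv.surjective i
    have cardKKm : (univ : Finset (K × K × Fin m)).card = p ^ 2 * m := by
      simp [Fintype.card_prod, hK]; ring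
    rw [← cardKKm]
    cases j with
    | inl x =>
      refine Finset.card_nbij' (fun z => (z.1, z.2.2.1, z.2.2.2.2))
        (fun y => (y.1, (τ.symm v).1 - y.1 * eK x, y.2.1, (τ.symm v).2, y.2.2))
        (fun _ _ => mem_univ _) ?_ ?_ (fun y _ => rfl)
      · intro y _
        simp only [mem_coe, mem_filter, mem_univ, true_and, hf, hgEdge_inl]
        rw [Equiv.apply_eq_iff_eq_symm_apply]
        exact Prod.ext (by ring) rfl
      · intro z hz
        simp only [mem_coe, mem_filter, mem_univ, true_and, hf, hgEdge_inl] at hz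
        rw [Equiv.apply_eq_iff_eq_symm_apply] at hz
        obtain ⟨h1, h2⟩ := Prod.ext_iff.mp hz
        obtain ⟨a, b, c, s, t⟩ := z
        simp only at h1 h2 ⊢
        refine Prod.ext rfl (Prod.ext ?_ (Prod.ext rfl (Prod.ext h2.symm rfl)))
        simp only
        rw [← h1]; ring
    | inr o =>
      by_cases ho : o = 0
      · -- class ∞₁ : vertex (a, s)
        subst ho
        refine Finset.card_nbij' (fun z => (z.2.1, z.2.2.1, z.2.2.2.2))
          (fun y => ((τ.symm v).1, y.1, y.2.1, (τ.symm v).2, y.2.2))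
          (fun _ _ => mem_univ _) ?_ ?_ (fun y _ => rfl)
        · intro y _
          simp only [mem_coe, mem_filter, mem_univ, true_and, hf, hgEdge_inr0]
          rw [Equiv.apply_eq_iff_eq_symm_apply]
        · intro z hz
          simp only [mem_coe, mem_filter, mem_univ, true_and, hf, hgEdge_inr0] at hz
          rw [Equiv.apply_eq_iff_eq_symm_apply] at hz
          obtain ⟨h1, h2⟩ := Prod.ext_iff.mp hz
          obtain ⟨a, b, c, s, t⟩ := z
          simp_all
      · -- class ∞₂ : vertex (c, t)
        refine Finset.card_nbij' (fun z => (z.1, z.2.1, z.2.2.2.1))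
          (fun y => (y.1, y.2.1, (τ.symm v).1, y.2.2, (τ.symm v).2))
          (fun _ _ => mem_univ _) ?_ ?_ (fun y _ => rfl)
        · intro y _
          simp only [mem_coe, mem_filter, mem_univ, true_and, hf, hgEdge_inr1' eK τ _ o ho]
          rw [Equiv.apply_eq_iff_eq_symm_apply]
        · intro z hz
          simp only [mem_coe, mem_filter, mem_univ, true_and, hf, hgEdge_inr1' eK τ _ o ho] at hz
          rw [Equiv.apply_eq_iff_eq_symm_apply] at hz
          obtain ⟨h1, h2⟩ := Prod.ext_iff.mp hz
          obtain ⟨a, b, c, s, t⟩ := z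
          simp_all
  · -- there is a matching of size m
    refine ⟨Finset.image (fun k : Fin m => f (0, 0, 0, k, k)) univ,
      Finset.image_subset_iff.mpr (fun k _ => Finset.mem_image_of_mem f (mem_univ _)),
      ?_, ?_⟩
    · intro e he e' he' hne i
      simp only [mem_image, mem_univ, true_and] at he he'
      obtain ⟨k, rfl⟩ := he
      obtain ⟨k', rfl⟩ := he'
      have hkk : k ≠ k' := fun h => hne (by rw [h])
      obtain ⟨j, rfl⟩ := finSumFinEquiv.surjective i
      cases j with
      | inl x =>
        simp only [hf, hgEdge_inl]
        intro h
        exact hkk ((Prod.ext_iff.mp (τ.injective h)).2)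
      | inr o =>
        by_cases ho : o = 0
        · subst ho
          simp only [hf, hgEdge_inr0]
          intro h
          exact hkk ((Prod.ext_iff.mp (τ.injective h)).2)
        · simp only [hf, hgEdge_inr1' eK τ _ o ho]
          intro h
          exact hkk ((Prod.ext_iff.mp (τ.injective h)).2)
    · rw [Finset.card_image_of_injective _ ?_, Finset.card_univ, Fintype.card_fin]
      intro k k' h
      have h' := congrFun h (finSumFinEquiv (Sum.inr 1))
      simp only [hf, hgEdge_inr1] at h'
      exact (Prod.ext_iff.mp (τ.injective h')).2
  · -- every matching has size at most m
    rintro k ⟨M, hME, hmatch, rfl⟩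
    have hcard : M.card ≤ (univ : Finset (Fin m)).card := by
      refine Finset.card_le_card_of_injOn
        (fun e => (τ.symm (e (finSumFinEquiv (Sum.inr 0)))).2)
        (fun _ _ => mem_univ _) ?_
      intro e he e' he' heq
      by_contra hne
      obtain ⟨z, -, rfl⟩ := Finset.mem_image.mp (hME he)
      obtain ⟨z', -, rfl⟩ := Finset.mem_image.mp (hME he')
      simp only [hf, hgEdge_inr0, Equiv.symm_apply_apply] at heq
      -- heq : z.s = z'.s
      by_cases ha : z.1 = z'.1
      · -- same slope and same copy index: they meet at ∞₁
        refine hmatch _ he _ he' hne (finSumFinEquiv (Sum.inr 0)) ?_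
        simp only [hf, hgEdge_inr0]
        rw [ha, heq]
      · -- different slopes: the lines meet
        set X : K := (z'.2.1 - z.2.1) / (z.1 - z'.1) with hX
        have hXeq : z.1 * eK (eK.symm X) + z.2.1 = z'.1 * eK (eK.symm X) + z'.2.1 := by
          rw [Equiv.apply_symm_apply]
          have h := div_mul_cancel₀ (z'.2.1 - z.2.1) (sub_ne_zero.mpr ha)
          rw [← hX] at h
          linear_combination h
        refine hmatch _ he _ he' hne (finSumFinEquiv (Sum.inl (eK.symm X))) ?_
        simp only [hf, hgEdge_inl]
        rw [hXeq, heq]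
    simpa using hcard

theorem stmt19 (p : ℕ) (hp : IsPrimePow p) (m : ℕ) (hm : 0 < m) :
    ∃ E : Finset (Fin (p + 2) → Fin (p * m)),
      (∀ (i : Fin (p + 2)) (v : Fin (p * m)),
        (E.filter (fun e => e i = v)).card = p ^ 2 * m) ∧
      IsGreatest {s : ℕ | ∃ M ⊆ E,
        (∀ e ∈ M, ∀ f ∈ M, e ≠ f → ∀ i, e i ≠ f i) ∧ M.card = s} m := by
  obtain ⟨q, n, hq, hn, rfl⟩ := hp
  haveI : Fact q.Prime := ⟨hq.nat_prime⟩
  haveI : Fintype (GaloisField q n) := Fintype.ofFinite _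
  haveI : DecidableEq (GaloisField q n) := Classical.decEq _
  have hcard : Fintype.card (GaloisField q n) = q ^ n := by
    rw [← Nat.card_eq_fintype_card]
    exact GaloisField.card q n hn.ne'
  exact hg_main (GaloisField q n) (q ^ n) m hcard
    (pow_pos hq.nat_prime.pos n) hm
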